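/- For integers r ≥ 4, 1 ≤ k ≤ r−3, and r ≤ n ≤ 2r−3−k, the quantity c_b(r,k,n) = C(k+(n−r)+1, k+1)·((2r−k)(k+1) − (n+1)k)/(k+2) is strictly positive and strictly increasing in n on this range. -/

import Mathlib

/-- The second summand `c_b(r,k,n)` of the coefficient `c̃_g(r,k,n)`. -/
def cb (r k n : ℕ) : ℚ :=
  ((k + (n - r) + 1).choose (k + 1) : ℚ) *
    ((2 * (r : ℚ) - k) * ((k : ℚ) + 1) - ((n : ℚ) + 1) * k) / ((k : ℚ) + 2)

theorem cb_pos_and_strictMono (r k n : ℕ) (hr : 4 ≤ r) (hk1 : 1 ≤ k) (hk : k ≤ r - 3)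
    (hn1 : r ≤ n) (hn : n ≤ 2 * r - 3 - k) :
    0 < cb r k n ∧ (n + 1 ≤ 2 * r - 3 - k → cb r k n < cb r k (n + 1)) := by
  obtain ⟨m, rfl⟩ := Nat.exists_eq_add_of_le hn1
  have hkr : k + 3 ≤ r := by omega
  have hm : m + k + 3 ≤ r := by omega
  have hs1 : r + m - r = m := by omega
  have hs2 : r + m + 1 - r = m + 1 := by omega
  have hA0 : 0 < ((k + m + 1).choose (k + 1)) := Nat.choose_pos (by omega)
  have hB0 : 0 < ((k + m + 1).choose k) := Nat.choose_pos (by omega)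
  have hid := Nat.choose_succ_right_eq (k + m + 1) k
  rw [show k + m + 1 - k = m + 1 from by omega] at hid
  have hPas : (k + m + 2).choose (k + 1)
      = (k + m + 1).choose k + (k + m + 1).choose (k + 1) :=
    Nat.choose_succ_succ (k + m + 1) k
  have hkrQ : (k : ℚ) + 3 ≤ r := by exact_mod_cast hkr
  have hmQ : (m : ℚ) + k + 3 ≤ r := by exact_mod_cast hm
  have hk1Q : (1 : ℚ) ≤ k := by exact_mod_cast hk1
  have haQ : (0 : ℚ) < ((k + m + 1).choose (k + 1) : ℚ) := by exact_mod_cast hA0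
  have hbQ : (0 : ℚ) < ((k + m + 1).choose k : ℚ) := by exact_mod_cast hB0
  have hidQ : ((k + m + 1).choose (k + 1) : ℚ) * (k + 1)
      = ((k + m + 1).choose k : ℚ) * (m + 1) := by exact_mod_cast hid
  set a : ℚ := ((k + m + 1).choose (k + 1) : ℚ) with ha
  set b : ℚ := ((k + m + 1).choose k : ℚ) with hb
  have hden : (0 : ℚ) < (k : ℚ) + 2 := by positivity
  constructor
  · rw [cb, hs1]
    apply div_pos _ hden
    apply mul_pos
    · push_cast [← ha]; exact haQ
    · push_cast; nlinarith
  · intro hn'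
    have hm' : m + k + 4 ≤ r := by omega
    have hm'Q : (m : ℚ) + k + 4 ≤ r := by exact_mod_cast hm'
    rw [cb, cb, hs1, hs2]
    rw [div_lt_div_iff₀ hden hden]
    rw [show k + (m + 1) + 1 = k + m + 2 from by ring, hPas]
    push_cast [← ha, ← hb]
    have hP2 : (2 * (r : ℚ) - k) * (k + 1) - ((r : ℚ) + m + 1 + 1) * k
        ≥ 2 * r + k := by
      nlinarith [mul_le_mul_of_nonneg_right
        (show ((r : ℚ) + m + 2) ≤ 2 * r - k - 2 by linarith)
        (show (0 : ℚ) ≤ k by positivity)]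
    have key : ((k : ℚ) + 1) * ((2 * r - k) * (k + 1) - (r + m + 1 + 1) * k)
        > (m + 1) * k := by
      nlinarith [mul_le_mul_of_nonneg_left hP2 (show (0 : ℚ) ≤ k + 1 by positivity),
        mul_le_mul_of_nonneg_right (show ((m : ℚ) + 1) ≤ r by linarith)
          (show (0 : ℚ) ≤ k by positivity)]
    have hkp : (0 : ℚ) < (k : ℚ) + 1 := by positivity
    have h3 : a * k < b * ((2 * (r : ℚ) - k) * (k + 1) - ((r : ℚ) + m + 1 + 1) * k) := by
      rw [← mul_lt_mul_iff_of_pos_right hkp]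
      calc a * k * (k + 1) = b * ((m + 1) * k) := by linear_combination (k : ℚ) * hidQ
        _ < b * (((k : ℚ) + 1) * ((2 * r - k) * (k + 1) - (r + m + 1 + 1) * k)) :=
            mul_lt_mul_of_pos_left key hbQ
        _ = b * ((2 * (r : ℚ) - k) * (k + 1) - ((r : ℚ) + m + 1 + 1) * k) * (k + 1) := by
            ring
    linarith [mul_lt_mul_of_pos_right h3 hden]
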